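/- With B_n as defined (the n×n bordered matrix [[0, e'],[e, T_{n-1}(-2,-2,-2)]]) and T_n the tridiagonal matrix with all nonzero entries equal to −2, for n ≥ 5 the recurrence det(B_n) = 4·det(T_{n-4}) + 8·det(B_{n-3}) holds. -/

import Mathlib

open Matrix

noncomputable section

/-- Tridiagonal matrix of order `m` with `a` on the diagonal, `b` on the superdiagonal
and `c` on the subdiagonal. -/
def tridiag {R : Type*} [Zero R] (m : ℕ) (a b c : R) : Matrix (Fin m) (Fin m) R :=
  Matrix.of fun i j =>
    if (i : ℕ) = (j : ℕ) then a
    else if (j : ℕ) = (i : ℕ) + 1 then b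
    else if (i : ℕ) = (j : ℕ) + 1 then c
    else 0

/-- The bordered matrix `[[0, e'],[e, A]]` where `e` is the all-ones vector. -/
def border {R : Type*} [Zero R] [One R] {m : ℕ} (A : Matrix (Fin m) (Fin m) R) :
    Matrix (Fin (m + 1)) (Fin (m + 1)) R :=
  Matrix.of fun i j =>
    if hi : i = 0 then (if j = 0 then 0 else 1)
    else if hj : j = 0 then 1
    else A (i.pred hi) (j.pred hj)

/-- The circulant matrix whose first row is `c`, each subsequent row the cyclic
right shift of the previous one. -/
def circ {R : Type*} {m : ℕ} (c : Fin m → R) : Matrix (Fin m) (Fin m) R :=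
  Matrix.of fun i j => c (j - i)

/-- The eccentricity matrix of the wheel graph `W_n` (hub is vertex `0`, cycle vertices
`1, …, n-1`): `E(W_n) = [[0, e'],[e, circ(0,0,2,…,2,0)]]`. -/
def EW (n : ℕ) : Matrix (Fin n) (Fin n) ℝ :=
  Matrix.of fun i j =>
    if i = j then 0
    else if (i : ℕ) = 0 ∨ (j : ℕ) = 0 then 1
    else if ((j : ℕ) : ZMod (n - 1)) - ((i : ℕ) : ZMod (n - 1)) = 1
            ∨ ((i : ℕ) : ZMod (n - 1)) - ((j : ℕ) : ZMod (n - 1)) = 1 then 0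
    else 2

/-- Auxiliary: the reversal `[[T_m, e],[e', 0]]` of `border (tridiag m (-2) (-2) (-2))`. -/
def RB (m : ℕ) : Matrix (Fin (m + 1)) (Fin (m + 1)) ℝ :=
  Matrix.of fun i j =>
    if (i : ℕ) = m then (if (j : ℕ) = m then 0 else 1)
    else if (j : ℕ) = m then 1
    else if (i : ℕ) ≤ (j : ℕ) + 1 ∧ (j : ℕ) ≤ (i : ℕ) + 1 then -2 else 0

/-- Auxiliary: last column all ones, `-2` on the band `c ≤ r ≤ c + 2`. -/
def Kmat (k : ℕ) : Matrix (Fin (k + 1)) (Fin (k + 1)) ℝ :=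
  Matrix.of fun r c =>
    if (c : ℕ) = k then 1
    else if (c : ℕ) ≤ (r : ℕ) ∧ (r : ℕ) ≤ (c : ℕ) + 2 then -2 else 0

def tseq (m : ℕ) : ℝ := (tridiag m (-2 : ℝ) (-2) (-2)).det
def bseq (m : ℕ) : ℝ := (RB m).det
def gseq (k : ℕ) : ℝ := (Kmat k).det

lemma succAbove_val {n : ℕ} (p : Fin (n+1)) (x : Fin n) :
    ((p.succAbove x : Fin (n+1)) : ℕ) = if (x:ℕ) < (p:ℕ) then (x:ℕ) else (x:ℕ)+1 := by
  rw [Fin.succAbove]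
  split_ifs with h1 h2 h3 <;> simp_all [Fin.lt_def]

lemma bseq_eq (m : ℕ) : (border (tridiag m (-2 : ℝ) (-2) (-2))).det = bseq m := by
  rw [bseq, ← Matrix.det_submatrix_equiv_self (Fin.revPerm) (border (tridiag m (-2 : ℝ) (-2) (-2)))]
  congr 1
  ext i j
  simp only [Matrix.submatrix_apply, Fin.revPerm_apply, border, RB, tridiag, Matrix.of_apply,
    Fin.ext_iff, Fin.val_rev, Fin.coe_pred, Fin.val_zero]
  have hi := i.isLt; have hj := j.isLt
  split_ifs <;> first | rfl | omega | (simp_all [Fin.ext_iff, Fin.val_rev]; omega) | simp_all [Fin.ext_iff, Fin.val_rev]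

lemma t0 : tseq 0 = 1 := Matrix.det_fin_zero

lemma t1 : tseq 1 = -2 := by
  rw [tseq, Matrix.det_fin_one]; rfl

lemma g0 : gseq 0 = 1 := by
  rw [gseq, Matrix.det_fin_one]; rfl

lemma g1 : gseq 1 = 0 := by
  rw [gseq, Matrix.det_fin_two]
  norm_num [Kmat]

lemma b0 : bseq 0 = 0 := by
  rw [bseq, Matrix.det_fin_one]; rfl

lemma b1 : bseq 1 = -1 := by
  rw [bseq, Matrix.det_fin_two]
  norm_num [RB]

lemma tseq_rec (m : ℕ) : tseq (m + 2) = -2 * tseq (m + 1) - 4 * tseq m := by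
  set A := tridiag (m+2) (-2 : ℝ) (-2) (-2) with hA
  have h0 : A.submatrix Fin.succ (Fin.succAbove 0) = tridiag (m+1) (-2 : ℝ) (-2) (-2) := by
    ext i j
    simp only [A, Matrix.submatrix_apply, tridiag, Matrix.of_apply, succAbove_val,
      Fin.val_succ, Fin.val_zero]
    split_ifs <;> first | rfl | omega | simp_all
  have h1 : (A.submatrix Fin.succ (Fin.succAbove (Fin.succ 0))).det = -2 * tseq m := by
    rw [Matrix.det_succ_column_zero, Fin.sum_univ_succ]
    have htail : ∑ i : Fin m, (-1)^((Fin.succ i : Fin (m+1)):ℕ) *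
        (A.submatrix Fin.succ (Fin.succAbove (Fin.succ 0))) (Fin.succ i) 0 *
        ((A.submatrix Fin.succ (Fin.succAbove (Fin.succ 0))).submatrix
          (Fin.succ i).succAbove Fin.succ).det = 0 := by
      refine Finset.sum_eq_zero fun i _ => ?_
      have : (A.submatrix Fin.succ (Fin.succAbove (Fin.succ 0))) (Fin.succ i) 0 = 0 := by
        simp only [A, Matrix.submatrix_apply, tridiag, Matrix.of_apply, succAbove_val,
          Fin.val_succ, Fin.val_zero]
        split_ifs <;> first | rfl | omega | simp_all
      rw [this]; ring
    rw [htail, add_zero]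
    have hent : (A.submatrix Fin.succ (Fin.succAbove (Fin.succ 0))) 0 0 = -2 := by
      simp only [A, Matrix.submatrix_apply, tridiag, Matrix.of_apply, succAbove_val,
        Fin.val_succ, Fin.val_zero]
      split_ifs <;> first | rfl | omega | simp_all
    have hsub : (A.submatrix Fin.succ (Fin.succAbove (Fin.succ 0))).submatrix
        (Fin.succAbove 0) Fin.succ = tridiag m (-2 : ℝ) (-2) (-2) := by
      ext i j
      simp only [A, Matrix.submatrix_apply, tridiag, Matrix.of_apply, succAbove_val,
        Fin.val_succ, Fin.val_zero]
      split_ifs <;> first | rfl | omega | simp_all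
    rw [hent, hsub]
    simp [tseq]
  rw [show tseq (m+2) = A.det from rfl, Matrix.det_succ_row_zero, Fin.sum_univ_succ,
    Fin.sum_univ_succ]
  have htail : ∑ j : Fin m, (-1)^(((Fin.succ (Fin.succ j)) : Fin (m+2)):ℕ) *
      A 0 (Fin.succ (Fin.succ j)) *
      (A.submatrix Fin.succ (Fin.succ (Fin.succ j)).succAbove).det = 0 := by
    refine Finset.sum_eq_zero fun j _ => ?_
    have : A 0 (Fin.succ (Fin.succ j)) = 0 := by
      simp only [A, tridiag, Matrix.of_apply, Fin.val_succ, Fin.val_zero]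
      split_ifs <;> first | rfl | omega | simp_all
    rw [this]; ring
  rw [htail, add_zero, h0, h1]
  have e1 : A 0 0 = -2 := by
    simp only [A, tridiag, Matrix.of_apply, Fin.val_zero]; norm_num
  have e2 : A 0 (Fin.succ 0) = -2 := by
    simp only [A, tridiag, Matrix.of_apply, Fin.val_succ, Fin.val_zero]; norm_num
  rw [e1, e2]
  show (-1:ℝ)^((0:Fin (m+2)):ℕ) * (-2) * tseq (m+1) +
    (-1)^(((Fin.succ 0 : Fin (m+2))):ℕ) * (-2) * (-2 * tseq m) = _
  norm_num
  ring

lemma gseq_rec (k : ℕ) : gseq (k + 1) = -2 * gseq k + (-1 : ℝ)^(k+1) * tseq (k + 1) := by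
  set A := Kmat (k+1) with hA
  have hz : ∀ x ∈ (Finset.univ : Finset (Fin (k+2))), x ∉ ({0, Fin.last (k+1)} : Finset (Fin (k+2))) →
      (-1:ℝ)^(x:ℕ) * A 0 x * (A.submatrix Fin.succ x.succAbove).det = 0 := by
    intro x _ hx
    simp only [Finset.mem_insert, Finset.mem_singleton] at hx
    push_neg at hx
    have h1 : (x:ℕ) ≠ 0 := fun h => hx.1 (Fin.ext h)
    have h2 : (x:ℕ) ≠ k+1 := fun h => hx.2 (Fin.ext (by simpa using h))
    have : A 0 x = 0 := by
      simp only [A, Kmat, Matrix.of_apply, Fin.val_zero]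
      split_ifs <;> first | rfl | omega | simp_all
    rw [this]; ring
  have hne : (0 : Fin (k+2)) ≠ Fin.last (k+1) := by
    simp [Fin.ext_iff]
  rw [show gseq (k+1) = A.det from rfl, Matrix.det_succ_row_zero,
    ← Finset.sum_subset (Finset.subset_univ _) hz, Finset.sum_pair hne]
  have e0 : A 0 0 = -2 := by
    simp only [A, Kmat, Matrix.of_apply, Fin.val_zero]
    split_ifs <;> first | rfl | omega | simp_all
  have el : A 0 (Fin.last (k+1)) = 1 := by
    simp only [A, Kmat, Matrix.of_apply, Fin.val_zero, Fin.val_last]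
    split_ifs <;> first | rfl | omega | simp_all
  have s0 : A.submatrix Fin.succ (Fin.succAbove 0) = Kmat k := by
    ext r c
    simp only [A, Matrix.submatrix_apply, Kmat, Matrix.of_apply, succAbove_val,
      Fin.val_succ, Fin.val_zero]
    split_ifs <;> first | rfl | omega | simp_all
  have sl : A.submatrix Fin.succ (Fin.last (k+1)).succAbove = tridiag (k+1) (-2:ℝ) (-2) (-2) := by
    ext r c
    simp only [A, Matrix.submatrix_apply, Kmat, tridiag, Matrix.of_apply, succAbove_val,
      Fin.val_succ, Fin.val_last]
    have := c.isLt
    split_ifs <;> first | rfl | omega | simp_all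
  rw [e0, el, s0, sl, Fin.val_last]
  show (-1:ℝ)^((0:Fin (k+2)):ℕ) * (-2) * gseq k + (-1:ℝ)^(k+1) * 1 * tseq (k+1) = _
  norm_num

lemma bseq_rec (m : ℕ) : bseq (m + 2) =
    -2 * bseq (m + 1) - 4 * bseq m + 2 * (-1 : ℝ)^(m+1) * gseq m + (-1 : ℝ)^m * gseq (m+1) := by
  set A := RB (m+2) with hA
  -- the j = 1 minor
  set M := A.submatrix Fin.succ (Fin.succAbove 1) with hM
  have hMdet : M.det = -2 * bseq m + (-1:ℝ)^(m+1) * gseq m := by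
    have hz : ∀ x ∈ (Finset.univ : Finset (Fin (m+2))),
        x ∉ ({0, Fin.last (m+1)} : Finset (Fin (m+2))) →
        (-1:ℝ)^(x:ℕ) * M x 0 * (M.submatrix x.succAbove Fin.succ).det = 0 := by
      intro x _ hx
      simp only [Finset.mem_insert, Finset.mem_singleton] at hx
      push_neg at hx
      have h1 : (x:ℕ) ≠ 0 := fun h => hx.1 (Fin.ext h)
      have h2 : (x:ℕ) ≠ m+1 := fun h => hx.2 (Fin.ext (by simpa using h))
      have : M x 0 = 0 := by
        simp only [M, A, Matrix.submatrix_apply, RB, Matrix.of_apply, succAbove_val,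
          Fin.val_succ, Fin.val_zero, Fin.val_one]
        split_ifs <;> first | rfl | omega | exact (‹False›).elim | exact absurd trivial ‹¬True› | simp_all | (simp_all; omega)
      rw [this]; ring
    have hne : (0 : Fin (m+2)) ≠ Fin.last (m+1) := by simp [Fin.ext_iff]
    rw [Matrix.det_succ_column_zero, ← Finset.sum_subset (Finset.subset_univ _) hz,
      Finset.sum_pair hne]
    have e0 : M 0 0 = -2 := by
      simp only [M, A, Matrix.submatrix_apply, RB, Matrix.of_apply, succAbove_val,
        Fin.val_succ, Fin.val_zero, Fin.val_one]
      split_ifs <;> first | rfl | omega | exact (‹False›).elim | exact absurd trivial ‹¬True› | simp_all | (simp_all; omega)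
    have el : M (Fin.last (m+1)) 0 = 1 := by
      simp only [M, A, Matrix.submatrix_apply, RB, Matrix.of_apply, succAbove_val,
        Fin.val_succ, Fin.val_zero, Fin.val_one, Fin.val_last]
      split_ifs <;> first | rfl | omega | exact (‹False›).elim | exact absurd trivial ‹¬True› | simp_all | (simp_all; omega)
    have s0 : M.submatrix (Fin.succAbove 0) Fin.succ = RB m := by
      ext r c
      simp only [M, A, Matrix.submatrix_apply, RB, Matrix.of_apply, succAbove_val,
        Fin.val_succ, Fin.val_zero, Fin.val_one]
      split_ifs <;> first | rfl | omega | exact (‹False›).elim | exact absurd trivial ‹¬True› | simp_all | (simp_all; omega)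
    have sl : M.submatrix (Fin.last (m+1)).succAbove Fin.succ = Kmat m := by
      ext r c
      have hr := r.isLt
      simp only [M, A, Matrix.submatrix_apply, RB, Kmat, Matrix.of_apply, succAbove_val,
        Fin.val_succ, Fin.val_one, Fin.val_last]
      split_ifs <;> first | rfl | omega | exact (‹False›).elim | exact absurd trivial ‹¬True› | simp_all [and_comm] | (simp_all; omega)
    rw [e0, el, s0, sl, Fin.val_last]
    show (-1:ℝ)^((0:Fin (m+2)):ℕ) * (-2) * bseq m + (-1:ℝ)^(m+1) * 1 * gseq m = _
    norm_num
  -- main expansion along row 0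
  have hz : ∀ x ∈ (Finset.univ : Finset (Fin (m+3))),
      x ∉ ({0, 1, Fin.last (m+2)} : Finset (Fin (m+3))) →
      (-1:ℝ)^(x:ℕ) * A 0 x * (A.submatrix Fin.succ x.succAbove).det = 0 := by
    intro x _ hx
    simp only [Finset.mem_insert, Finset.mem_singleton] at hx
    push_neg at hx
    have h1 : (x:ℕ) ≠ 0 := fun h => hx.1 (Fin.ext h)
    have h2 : (x:ℕ) ≠ 1 := fun h => hx.2.1 (Fin.ext (by simpa using h))
    have h3 : (x:ℕ) ≠ m+2 := fun h => hx.2.2 (Fin.ext (by simpa using h))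
    have : A 0 x = 0 := by
      simp only [A, RB, Matrix.of_apply, Fin.val_zero]
      split_ifs <;> first | rfl | omega | exact (‹False›).elim | exact absurd trivial ‹¬True› | simp_all | (simp_all; omega)
    rw [this]; ring
  have hne01 : (0 : Fin (m+3)) ≠ 1 := by simp [Fin.ext_iff]
  have hne0l : (0 : Fin (m+3)) ∉ ({1, Fin.last (m+2)} : Finset (Fin (m+3))) := by
    simp [Fin.ext_iff]
  have hne1l : (1 : Fin (m+3)) ∉ ({Fin.last (m+2)} : Finset (Fin (m+3))) := by
    simp [Fin.ext_iff]
  rw [show bseq (m+2) = A.det from rfl, Matrix.det_succ_row_zero,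
    ← Finset.sum_subset (Finset.subset_univ _) hz, Finset.sum_insert hne0l,
    Finset.sum_insert hne1l, Finset.sum_singleton]
  have e0 : A 0 0 = -2 := by
    simp only [A, RB, Matrix.of_apply, Fin.val_zero]
    split_ifs <;> first | rfl | omega | exact (‹False›).elim | exact absurd trivial ‹¬True› | simp_all | (simp_all; omega)
  have e1 : A 0 1 = -2 := by
    simp only [A, RB, Matrix.of_apply, Fin.val_zero, Fin.val_one]
    split_ifs <;> first | rfl | omega | exact (‹False›).elim | exact absurd trivial ‹¬True› | simp_all | (simp_all; omega)
  have el : A 0 (Fin.last (m+2)) = 1 := by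
    simp only [A, RB, Matrix.of_apply, Fin.val_zero, Fin.val_last]
    split_ifs <;> first | rfl | omega | exact (‹False›).elim | exact absurd trivial ‹¬True› | simp_all | (simp_all; omega)
  have s0 : A.submatrix Fin.succ (Fin.succAbove 0) = RB (m+1) := by
    ext r c
    simp only [A, Matrix.submatrix_apply, RB, Matrix.of_apply, succAbove_val,
      Fin.val_succ, Fin.val_zero]
    split_ifs <;> first | rfl | omega | exact (‹False›).elim | exact absurd trivial ‹¬True› | simp_all | (simp_all; omega)
  have sl : A.submatrix Fin.succ (Fin.last (m+2)).succAbove = (Kmat (m+1)).transpose := by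
    ext r c
    have hc := c.isLt
    simp only [A, Matrix.submatrix_apply, RB, Kmat, Matrix.transpose_apply, Matrix.of_apply,
      succAbove_val, Fin.val_succ, Fin.val_last]
    split_ifs <;> first | rfl | omega | exact (‹False›).elim | exact absurd trivial ‹¬True› | simp_all | (simp_all; omega)
  rw [e0, e1, el, s0, sl, ← hM, hMdet, Matrix.det_transpose, Fin.val_last]
  have hb : (RB (m+1)).det = bseq (m+1) := rfl
  have hg : (Kmat (m+1)).det = gseq (m+1) := rfl
  have hp : (-1:ℝ)^(m+2) = (-1:ℝ)^m := by rw [pow_add]; norm_num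
  rw [hb, hg]
  simp only [Fin.val_zero, Fin.val_one, pow_zero, pow_one, hp]
  ring

lemma closed (k : ℕ) :
    tseq (3*k) = 8^k ∧ tseq (3*k+1) = -2 * 8^k ∧ tseq (3*k+2) = 0 ∧
    gseq (3*k) = (-8)^k ∧ gseq (3*k+1) = 0 ∧ gseq (3*k+2) = 0 ∧
    bseq (3*k) = k * 8^k / 2 ∧ bseq (3*k+1) = -((k:ℝ)+1) * 8^k ∧ bseq (3*k+2) = 0 := by
  induction k with
  | zero =>
    have t2 : tseq 2 = 0 := by rw [show 2 = 0 + 2 from rfl, tseq_rec, t1, t0]; ring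
    have g2 : gseq 2 = 0 := by
      rw [show (2:ℕ) = 1 + 1 from rfl, gseq_rec, g1, show (1:ℕ)+1 = 0+2 from rfl, tseq_rec, t1, t0]
      ring
    have b2 : bseq 2 = 0 := by rw [show (2:ℕ) = 0 + 2 from rfl, bseq_rec, b1, b0, g0, g1]; ring
    refine ⟨by simpa using t0, by simpa using t1, by simpa using t2, by simpa using g0,
      by simpa using g1, by simpa using g2, by simpa using b0, by simp [b1], by simpa using b2⟩
  | succ k ih =>
    obtain ⟨ht0, ht1, ht2, hg0, hg1, hg2, hb0, hb1, hb2⟩ := ih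
    have e2 : (-1:ℝ)^(3*k+2) = (-1:ℝ)^k := by rw [pow_add, pow_mul]; norm_num
    have e3 : (-1:ℝ)^(3*k+3) = -(-1:ℝ)^k := by rw [pow_add, pow_mul]; norm_num
    have e4 : (-1:ℝ)^(3*k+4) = (-1:ℝ)^k := by rw [pow_add, pow_mul]; norm_num
    have h8 : ((-8:ℝ))^k = (-1:ℝ)^k * 8^k := by rw [neg_pow]
    have h8' : ((-8:ℝ))^(k+1) = (-1:ℝ)^k * (-8) * 8^k := by rw [pow_succ, neg_pow]; ring
    have hc : ((-1:ℝ))^k * (-8)^k = 8^k := by rw [← mul_pow]; norm_num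
    have hcc : ((-1:ℝ))^k * (-8)^(k+1) = -8^(k+1) := by
      rw [pow_succ, ← mul_assoc, hc, pow_succ]; ring
    have T3 : tseq (3*k+3) = 8^(k+1) := by
      have h := tseq_rec (3*k+1)
      simp only [show 3*k+1+2 = 3*k+3 from by omega, show 3*k+1+1 = 3*k+2 from by omega] at h
      rw [h, ht2, ht1, pow_succ]; ring
    have T4 : tseq (3*k+4) = -2*8^(k+1) := by
      have h := tseq_rec (3*k+2)
      simp only [show 3*k+2+2 = 3*k+4 from by omega, show 3*k+2+1 = 3*k+3 from by omega] at h
      rw [h, T3, ht2]; ring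
    have T5 : tseq (3*k+5) = 0 := by
      have h := tseq_rec (3*k+3)
      simp only [show 3*k+3+2 = 3*k+5 from by omega, show 3*k+3+1 = 3*k+4 from by omega] at h
      rw [h, T3, T4]; ring
    have G3 : gseq (3*k+3) = (-8)^(k+1) := by
      have h := gseq_rec (3*k+2)
      simp only [show 3*k+2+1 = 3*k+3 from by omega] at h
      rw [h, hg2, T3, e3, h8']; ring
    have G4 : gseq (3*k+4) = 0 := by
      have h := gseq_rec (3*k+3)
      simp only [show 3*k+3+1 = 3*k+4 from by omega] at h
      rw [h, G3, T4, e4, h8']; ring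
    have G5 : gseq (3*k+5) = 0 := by
      have h := gseq_rec (3*k+4)
      simp only [show 3*k+4+1 = 3*k+5 from by omega] at h
      rw [h, G4, T5]; ring
    have B3 : bseq (3*k+3) = ((k:ℝ)+1) * 8^(k+1) / 2 := by
      have h := bseq_rec (3*k+1)
      simp only [show 3*k+1+2 = 3*k+3 from by omega, show 3*k+1+1 = 3*k+2 from by omega] at h
      rw [h, hb2, hb1, hg1, hg2, pow_succ]; ring
    have B4 : bseq (3*k+4) = -((k:ℝ)+2) * 8^(k+1) := by
      have h := bseq_rec (3*k+2)
      simp only [show 3*k+2+2 = 3*k+4 from by omega, show 3*k+2+1 = 3*k+3 from by omega] at h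
      rw [h, B3, hb2, hg2, G3, e2]; linear_combination hcc
    have B5 : bseq (3*k+5) = 0 := by
      have h := bseq_rec (3*k+3)
      simp only [show 3*k+3+2 = 3*k+5 from by omega, show 3*k+3+1 = 3*k+4 from by omega] at h
      rw [h, B4, B3, G3, G4, e4]; linear_combination 2 * hcc
    have i0 : 3*(k+1) = 3*k+3 := by ring
    have i1 : 3*(k+1)+1 = 3*k+4 := by ring
    have i2 : 3*(k+1)+2 = 3*k+5 := by ring
    rw [i1, i2, i0]
    push_cast
    exact ⟨T3, T4, T5, G3, G4, G5, by rw [B3], by rw [B4]; ring, B5⟩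

lemma key (m : ℕ) : bseq (m + 3) = 4 * tseq m + 8 * bseq m := by
  obtain ⟨k, r, hr, rfl⟩ : ∃ k r, r < 3 ∧ m = 3*k + r := ⟨m/3, m%3, Nat.mod_lt _ (by norm_num), (Nat.div_add_mod m 3).symm⟩
  interval_cases r
  · obtain ⟨ht0, -, -, -, -, -, hb0, -, -⟩ := closed k
    obtain ⟨hb3, -⟩ := (closed (k+1)).2.2.2.2.2.2
    have : 3*k+0+3 = 3*(k+1) := by ring
    rw [show 3*k+0 = 3*k from by ring] at *
    rw [this, hb3, ht0, hb0]
    push_cast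
    rw [pow_succ]; ring
  · obtain ⟨-, ht1, -, -, -, -, -, hb1, -⟩ := closed k
    obtain ⟨-, hb4, -⟩ := (closed (k+1)).2.2.2.2.2.2
    have : 3*k+1+3 = 3*(k+1)+1 := by ring
    rw [this, hb4, ht1, hb1]
    push_cast
    rw [pow_succ]; ring
  · obtain ⟨-, -, ht2, -, -, -, -, -, hb2⟩ := closed k
    obtain ⟨-, -, hb5⟩ := (closed (k+1)).2.2.2.2.2.2
    have : 3*k+2+3 = 3*(k+1)+2 := by ring
    rw [this, hb5, ht2, hb2]
    ring

theorem stmt3 (n : ℕ) (h : 5 ≤ n) :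
    (border (tridiag (n - 1) (-2 : ℝ) (-2) (-2))).det =
      4 * (tridiag (n - 4) (-2 : ℝ) (-2) (-2)).det
        + 8 * (border (tridiag (n - 4) (-2 : ℝ) (-2) (-2))).det := by
  obtain ⟨m, rfl⟩ : ∃ m, n = m + 5 := ⟨n - 5, by omega⟩
  have h1 : m + 5 - 1 = (m + 1) + 3 := by omega
  have h4 : m + 5 - 4 = m + 1 := by omega
  rw [h1, h4, bseq_eq, bseq_eq, key]
  rfl
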